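/- Let Y be a real-valued random variable on a probability space and let ȳ ∈ ℝ be such that P(Y = ȳ) = 0. Then E[ĩ_ε(Y − ȳ)] → P(Y ≤ ȳ) as ε → 0⁺. In particular, the chance constraint P(Y ≤ ȳ) ≥ 1 − α is the limiting form of the surrogate constraint E[ĩ_ε(Y − ȳ)] ≥ 1 − α. -/
import Mathlib


open MeasureTheory

/-- The logistic surrogate of the indicator function:
`ĩ_ε(x) = e^{-x/ε} / (1 + e^{-x/ε})`. -/
noncomputable def logisticSurrogate (ε x : ℝ) : ℝ :=
  Real.exp (-x / ε) / (1 + Real.exp (-x / ε))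

lemma logisticSurrogate_eq (ε x : ℝ) :
    logisticSurrogate ε x = (Real.exp (x / ε) + 1)⁻¹ := by
  unfold logisticSurrogate
  rw [neg_div, Real.exp_neg]
  have ht : (0:ℝ) < Real.exp (x / ε) := Real.exp_pos _
  field_simp

lemma logisticSurrogate_nonneg (ε x : ℝ) : 0 ≤ logisticSurrogate ε x := by
  unfold logisticSurrogate; positivity

lemma logisticSurrogate_le_one (ε x : ℝ) : logisticSurrogate ε x ≤ 1 := by
  unfold logisticSurrogate
  rw [div_le_one (by positivity)]
  linarith

lemma logistic_tendsto (x : ℝ) (hx : x ≠ 0) :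
    Filter.Tendsto (fun ε : ℝ => logisticSurrogate ε x) (nhdsWithin 0 (Set.Ioi 0))
      (nhds (Set.indicator (Set.Iic (0:ℝ)) (fun _ => (1:ℝ)) x)) := by
  simp only [logisticSurrogate_eq]
  have hinv : Filter.Tendsto (fun ε : ℝ => ε⁻¹) (nhdsWithin 0 (Set.Ioi 0)) Filter.atTop :=
    tendsto_inv_nhdsGT_zero
  rcases lt_or_gt_of_ne hx with h | h
  · rw [Set.indicator_apply, if_pos (Set.mem_Iic.mpr h.le)]
    have h1 : Filter.Tendsto (fun ε : ℝ => x / ε) (nhdsWithin 0 (Set.Ioi 0)) Filter.atBot := by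
      simpa [div_eq_mul_inv] using hinv.const_mul_atTop_of_neg h
    have h2 : Filter.Tendsto (fun ε : ℝ => Real.exp (x / ε) + 1)
        (nhdsWithin 0 (Set.Ioi 0)) (nhds (0 + 1)) :=
      ((Real.tendsto_exp_atBot.comp h1).add tendsto_const_nhds)
    have := h2.inv₀ (by norm_num)
    simpa using this
  · rw [Set.indicator_apply, if_neg (by simpa using h.not_ge)]
    have h1 : Filter.Tendsto (fun ε : ℝ => x / ε) (nhdsWithin 0 (Set.Ioi 0)) Filter.atTop := by
      simpa [div_eq_mul_inv] using hinv.const_mul_atTop h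
    have h2 : Filter.Tendsto (fun ε : ℝ => Real.exp (x / ε) + 1)
        (nhdsWithin 0 (Set.Ioi 0)) Filter.atTop :=
      (Real.tendsto_exp_atTop.comp h1).atTop_add tendsto_const_nhds
    exact h2.inv_tendsto_atTop

theorem expectation_logisticSurrogate_tendsto_prob
    {Ω : Type*} [MeasurableSpace Ω] (μ : Measure Ω) [IsProbabilityMeasure μ]
    (Y : Ω → ℝ) (hY : Measurable Y) (ybar : ℝ)
    (hzero : μ {ω | Y ω = ybar} = 0) :
    Filter.Tendsto (fun ε : ℝ => ∫ ω, logisticSurrogate ε (Y ω - ybar) ∂μ)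
      (nhdsWithin 0 (Set.Ioi 0)) (nhds (μ {ω | Y ω ≤ ybar}).toReal) := by
  have hset : MeasurableSet {ω | Y ω ≤ ybar} := hY measurableSet_Iic
  have key : Filter.Tendsto (fun ε : ℝ => ∫ ω, logisticSurrogate ε (Y ω - ybar) ∂μ)
      (nhdsWithin 0 (Set.Ioi 0))
      (nhds (∫ ω, Set.indicator {ω | Y ω ≤ ybar} (fun _ => (1:ℝ)) ω ∂μ)) := by
    apply tendsto_integral_filter_of_dominated_convergence (fun _ => (1:ℝ))
    · filter_upwards with ε
      apply Measurable.aestronglyMeasurable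
      simp only [logisticSurrogate_eq]
      exact (((((hY.sub_const ybar).div_const ε).exp).add_const 1).inv)
    · filter_upwards with ε
      filter_upwards with ω
      rw [Real.norm_eq_abs, abs_le]
      exact ⟨by linarith [logisticSurrogate_nonneg ε (Y ω - ybar)],
        logisticSurrogate_le_one ε (Y ω - ybar)⟩
    · exact integrable_const 1
    · have : ∀ᵐ ω ∂μ, Y ω ≠ ybar := by
        rw [ae_iff]; simpa using hzero
      filter_upwards [this] with ω hω
      have hx : Y ω - ybar ≠ 0 := sub_ne_zero.mpr hω
      have := logistic_tendsto (Y ω - ybar) hx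
      have hind : Set.indicator (Set.Iic (0:ℝ)) (fun _ => (1:ℝ)) (Y ω - ybar)
          = Set.indicator {ω | Y ω ≤ ybar} (fun _ => (1:ℝ)) ω := by
        simp only [Set.indicator_apply, Set.mem_Iic, Set.mem_setOf_eq, sub_nonpos]
      rwa [hind] at this
  have : ∫ ω, Set.indicator {ω | Y ω ≤ ybar} (fun _ => (1:ℝ)) ω ∂μ
      = (μ {ω | Y ω ≤ ybar}).toReal := integral_indicator_one hset
  rwa [this] at key
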